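/- Let A ∈ B(E,F) have generalized inverse A⁺. On V₁ = { X ∈ B(E,F) : ‖(X − A)A⁺‖ < 1 }, define D(X) = (X − A) P_{R(A⁺)} + C_A(A⁺,X)⁻¹ X and D₊(X) = X P_{R(A⁺)} + C_A(A⁺,X) X P_{N(A)}, where P_{R(A⁺)} and P_{N(A)} are the projections of E onto R(A⁺) and N(A) along the decomposition E = N(A) ⊕ R(A⁺), and C_A(A⁺,X) = I_F + (X−A)A⁺. Then D and D₊ are mutually inverse bijections of V₁ onto itself; in particular D(D₊(X)) = X and D₊(D(X)) = X for all X ∈ V₁, and D(A) = A. -/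

import Mathlib

open ContinuousLinearMap

variable {E F : Type*} [NormedAddCommGroup E] [NormedSpace ℝ E] [CompleteSpace E]
  [NormedAddCommGroup F] [NormedSpace ℝ F] [CompleteSpace F]

/-- The map D(X) = (X - A) P_{R(A⁺)} + C_A(A⁺,X)⁻¹ X. -/
noncomputable def mapD (A : E →L[ℝ] F) (Ap : F →L[ℝ] E) (Pr : E →L[ℝ] E)
    (X : E →L[ℝ] F) : E →L[ℝ] F :=
  (X - A) ∘L Pr + Ring.inverse (ContinuousLinearMap.id ℝ F + (X - A) ∘L Ap) ∘L X

/-- The map D₊(X) = X P_{R(A⁺)} + C_A(A⁺,X) X P_{N(A)}, where P_{N(A)} = I - P_{R(A⁺)}. -/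
noncomputable def mapDstar (A : E →L[ℝ] F) (Ap : F →L[ℝ] E) (Pr : E →L[ℝ] E)
    (X : E →L[ℝ] F) : E →L[ℝ] F :=
  X ∘L Pr + (ContinuousLinearMap.id ℝ F + (X - A) ∘L Ap) ∘L
    (X ∘L (ContinuousLinearMap.id ℝ E - Pr))

theorem stmt18 (A : E →L[ℝ] F) (Ap : F →L[ℝ] E)
    (h1 : A ∘L (Ap ∘L A) = A) (h2 : Ap ∘L (A ∘L Ap) = Ap)
    (Pr : E →L[ℝ] E) (hPr : Pr ∘L Pr = Pr)
    (hPrr : LinearMap.range (Pr : E →ₗ[ℝ] E) = LinearMap.range (Ap : F →ₗ[ℝ] E))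
    (hPrk : LinearMap.ker (Pr : E →ₗ[ℝ] E) = LinearMap.ker (A : E →ₗ[ℝ] F)) :
    (∀ X : E →L[ℝ] F, ‖(X - A) ∘L Ap‖ < 1 →
      ‖(mapD A Ap Pr X - A) ∘L Ap‖ < 1 ∧
      ‖(mapDstar A Ap Pr X - A) ∘L Ap‖ < 1 ∧
      mapD A Ap Pr (mapDstar A Ap Pr X) = X ∧
      mapDstar A Ap Pr (mapD A Ap Pr X) = X) ∧
    mapD A Ap Pr A = A := by
  -- Pr is the projection Ap ∘ A
  have hPrEq : Pr = Ap ∘L A := by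
    ext x
    have hPP : Pr (Pr x) = Pr x := by
      have := DFunLike.congr_fun hPr x
      simpa using this
    have hmem : x - Pr x ∈ LinearMap.ker (A : E →ₗ[ℝ] F) := by
      rw [← hPrk]
      simp [LinearMap.mem_ker, map_sub, hPP]
    have hAx : A x = A (Pr x) := by
      have h0 : A x - A (Pr x) = 0 := by
        simpa [map_sub] using LinearMap.mem_ker.mp hmem
      exact sub_eq_zero.mp h0
    obtain ⟨y, hy⟩ : Pr x ∈ LinearMap.range (Ap : F →ₗ[ℝ] E) := by
      rw [← hPrr]; exact ⟨x, rfl⟩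
    have h2y : Ap (A (Ap y)) = Ap y := by
      have := DFunLike.congr_fun h2 y
      simpa using this
    simp only [coe_comp', Function.comp_apply]
    rw [hAx, ← hy, ContinuousLinearMap.coe_coe, h2y]
  subst hPrEq
  have hApA : (Ap ∘L A) ∘L Ap = Ap := by rw [comp_assoc]; exact h2
  have hProj : (Ap ∘L A) ∘L (Ap ∘L A) = Ap ∘L A := by rw [comp_assoc, h1]
  constructor
  · intro X hX
    set t : F →L[ℝ] F := (X - A) ∘L Ap with ht
    set c : F →L[ℝ] F := ContinuousLinearMap.id ℝ F + t with hc
    have hu : IsUnit c := by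
      have h : IsUnit ((1 : F →L[ℝ] F) - -t) :=
        (Units.oneSub (-t) (by simpa using hX)).isUnit
      have he : (1 : F →L[ℝ] F) - -t = c := by rw [sub_neg_eq_add, hc, one_def]
      rwa [he] at h
    have hci : Ring.inverse c ∘L c = ContinuousLinearMap.id ℝ F := by
      have := Ring.inverse_mul_cancel c hu
      rwa [mul_def, one_def] at this
    have hic : c ∘L Ring.inverse c = ContinuousLinearMap.id ℝ F := by
      have := Ring.mul_inverse_cancel c hu
      rwa [mul_def, one_def] at this
    have hcanL : ∀ g : E →L[ℝ] F, Ring.inverse c ∘L (c ∘L g) = g := by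
      intro g; rw [← comp_assoc, hci, id_comp]
    have hcanL2 : ∀ g : F →L[ℝ] F, Ring.inverse c ∘L (c ∘L g) = g := by
      intro g; rw [← comp_assoc, hci, id_comp]
    have hcanR : ∀ g : E →L[ℝ] F, c ∘L (Ring.inverse c ∘L g) = g := by
      intro g; rw [← comp_assoc, hic, id_comp]
    have hcA : c ∘L A = X ∘L (Ap ∘L A) := by
      have : c ∘L A = A + (X ∘L (Ap ∘L A) - A) := by
        rw [hc, ht, add_comp, id_comp, comp_assoc, sub_comp, h1]
      rw [this]; abel
    have hcAAp : c ∘L (A ∘L Ap) = X ∘L Ap := by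
      have : c ∘L (A ∘L Ap) = A ∘L Ap + (X ∘L Ap - A ∘L Ap) := by
        rw [hc, ht, add_comp, id_comp, comp_assoc, h2, sub_comp]
      rw [this]; abel
    have hciXAp : Ring.inverse c ∘L (X ∘L Ap) = A ∘L Ap := by
      rw [← hcAAp]; exact hcanL2 _
    have hciXP : Ring.inverse c ∘L (X ∘L (Ap ∘L A)) = A := by
      rw [← hcA]; exact hcanL A
    -- claim b
    have hb : (mapD A Ap (Ap ∘L A) X - A) ∘L Ap = t := by
      simp only [mapD, ← ht, ← hc]
      rw [sub_comp, add_comp, comp_assoc (X - A) (Ap ∘L A) Ap, hApA,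
        comp_assoc (Ring.inverse c) X Ap, hciXAp, ht]
      abel
    -- claim c
    have hcc : (mapDstar A Ap (Ap ∘L A) X - A) ∘L Ap = t := by
      simp only [mapDstar, ← ht, ← hc]
      rw [sub_comp, add_comp, comp_assoc X (Ap ∘L A) Ap, hApA,
        comp_assoc c (X ∘L (ContinuousLinearMap.id ℝ E - Ap ∘L A)) Ap,
        comp_assoc X (ContinuousLinearMap.id ℝ E - Ap ∘L A) Ap,
        sub_comp, id_comp, hApA, sub_self, comp_zero, comp_zero, add_zero, ht, sub_comp]
    refine ⟨by rw [hb]; exact hX, by rw [hcc]; exact hX, ?_, ?_⟩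
    · -- mapD (mapDstar X) = X
      set Y := mapDstar A Ap (Ap ∘L A) X with hY
      have hYP : Y ∘L (Ap ∘L A) = X ∘L (Ap ∘L A) := by
        rw [hY]
        simp only [mapDstar, ← ht, ← hc]
        rw [add_comp, comp_assoc X (Ap ∘L A) (Ap ∘L A), hProj,
          comp_assoc c (X ∘L (ContinuousLinearMap.id ℝ E - Ap ∘L A)) (Ap ∘L A),
          comp_assoc X (ContinuousLinearMap.id ℝ E - Ap ∘L A) (Ap ∘L A),
          sub_comp, id_comp, hProj, sub_self, comp_zero, comp_zero, add_zero]
      have hY2 : Ring.inverse c ∘L Y =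
          A + X ∘L (ContinuousLinearMap.id ℝ E - Ap ∘L A) := by
        rw [hY]
        simp only [mapDstar, ← ht, ← hc]
        rw [comp_add, hciXP, hcanL (X ∘L (ContinuousLinearMap.id ℝ E - Ap ∘L A))]
      simp only [mapD]
      rw [hcc, ← hc, sub_comp, hYP, h1, hY2, comp_sub, comp_id]
      abel
    · -- mapDstar (mapD X) = X
      set Z := mapD A Ap (Ap ∘L A) X with hZ
      have hZP : Z ∘L (Ap ∘L A) = X ∘L (Ap ∘L A) := by
        rw [hZ]
        simp only [mapD, ← ht, ← hc]
        rw [add_comp, comp_assoc (X - A) (Ap ∘L A) (Ap ∘L A), hProj,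
          comp_assoc (Ring.inverse c) X (Ap ∘L A), hciXP, sub_comp, h1]
        abel
      have hZrest : Z ∘L (ContinuousLinearMap.id ℝ E - Ap ∘L A) =
          Ring.inverse c ∘L X - A := by
        rw [comp_sub, comp_id, hZP, hZ]
        simp only [mapD, ← ht, ← hc]
        rw [sub_comp, h1]
        abel
      simp only [mapDstar]
      rw [hb, ← hc, hZP, hZrest, comp_sub, hcanR X, hcA]
      abel
  · rw [mapD, sub_self, zero_comp, zero_comp, add_zero, zero_add, ← one_def,
      Ring.inverse_one, one_def, id_comp]
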